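/- For the family of binary distributions with P(A=0,B=0,C=0,D=1) = P(A=0,B=1,C=0,D=0) = P(A=1,B=0,C=0,D=1) = P(A=1,B=1,C=0,D=1) = (1-ε)/4 and P(A=1,B=0,C=1,D=1) = ε, as ε → 0 one has I(C:D) = Θ(ε) while I(A:B) = O(ε²). In particular, for every κ > 0 there exists ε₀ > 0 such that for all 0 < ε < ε₀, I(C:D) > κ·I(A:B). -/

import Mathlib

open scoped BigOperators Classical

noncomputable section

/-- `p` is a probability mass function on the finite type `Ω`. -/
def IsPMF {Ω : Type*} [Fintype Ω] (p : Ω → ℝ) : Prop :=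
  (∀ ω, 0 ≤ p ω) ∧ ∑ ω, p ω = 1

/-- Probability of the event `X = s` under `p`. -/
def prOf {Ω S : Type*} [Fintype Ω] [DecidableEq S] (p : Ω → ℝ) (X : Ω → S) (s : S) : ℝ :=
  ∑ ω ∈ Finset.univ.filter (fun ω => X ω = s), p ω

/-- Shannon entropy (in bits) of the random variable `X` under the pmf `p`. -/
def ent {Ω S : Type*} [Fintype Ω] [Fintype S] [DecidableEq S] (p : Ω → ℝ) (X : Ω → S) : ℝ :=
  - ∑ s : S, prOf p X s * Real.logb 2 (prOf p X s)

/-- Mutual information `I(X:Y) = H(X) + H(Y) - H(X,Y)`. -/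
def mi {Ω S T : Type*} [Fintype Ω] [Fintype S] [Fintype T] [DecidableEq S] [DecidableEq T]
    (p : Ω → ℝ) (X : Ω → S) (Y : Ω → T) : ℝ :=
  ent p X + ent p Y - ent p (fun ω => (X ω, Y ω))

/-- Conditional mutual information `I(X:Y|Z) = H(X,Z) + H(Y,Z) - H(X,Y,Z) - H(Z)`. -/
def cmi {Ω S T U : Type*} [Fintype Ω] [Fintype S] [Fintype T] [Fintype U]
    [DecidableEq S] [DecidableEq T] [DecidableEq U]
    (p : Ω → ℝ) (X : Ω → S) (Y : Ω → T) (Z : Ω → U) : ℝ :=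
  ent p (fun ω => (X ω, Z ω)) + ent p (fun ω => (Y ω, Z ω))
    - ent p (fun ω => (X ω, Y ω, Z ω)) - ent p Z

/-- Conditional entropy `H(X|Y) = H(X,Y) - H(Y)`. -/
def condEnt {Ω S T : Type*} [Fintype Ω] [Fintype S] [Fintype T] [DecidableEq S] [DecidableEq T]
    (p : Ω → ℝ) (X : Ω → S) (Y : Ω → T) : ℝ :=
  ent p (fun ω => (X ω, Y ω)) - ent p Y

/-- The four coordinate random variables on `Bool × Bool × Bool × Bool`. -/
def vA : Bool × Bool × Bool × Bool → Bool := fun ω => ω.1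
def vB : Bool × Bool × Bool × Bool → Bool := fun ω => ω.2.1
def vC : Bool × Bool × Bool × Bool → Bool := fun ω => ω.2.2.1
def vD : Bool × Bool × Bool × Bool → Bool := fun ω => ω.2.2.2

/-- The witness distribution of Theorem 3(a). -/
def p10 (ε : ℝ) : Bool × Bool × Bool × Bool → ℝ := fun ω =>
  if ω = (false, false, false, true) then (1 - ε) / 4
  else if ω = (false, true, false, false) then (1 - ε) / 4
  else if ω = (true, false, false, true) then (1 - ε) / 4
  else if ω = (true, true, false, true) then (1 - ε) / 4
  else if ω = (true, false, true, true) then ε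
  else 0

lemma CD_key (ε : ℝ) :
    mi (p10 ε) vC vD = -((1-ε) * Real.logb 2 (1-ε)) - (3+ε)/4 * Real.logb 2 ((3+ε)/4)
      + 3*(1-ε)/4 * Real.logb 2 (3*(1-ε)/4) := by
  simp only [mi, ent, prOf, Finset.sum_filter]
  simp only [p10, vC, vD, Fintype.sum_prod_type, Fintype.sum_bool]
  norm_num
  ring_nf

lemma AB_key (ε : ℝ) :
    mi (p10 ε) vA vB = -((1-ε) * Real.logb 2 ((1-ε)/2)) - (1+ε) * Real.logb 2 ((1+ε)/2)
      + 3*(1-ε)/4 * Real.logb 2 ((1-ε)/4) + (1+3*ε)/4 * Real.logb 2 ((1+3*ε)/4) := by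
  simp only [mi, ent, prOf, Finset.sum_filter]
  simp only [p10, vA, vB, Fintype.sum_prod_type, Fintype.sum_bool]
  norm_num
  ring_nf

lemma CD_form (ε : ℝ) (h0 : 0 < ε) (h1 : ε < 1/20) :
    mi (p10 ε) vC vD * Real.log 2 =
      -((1-ε) * Real.log (1-ε)) + 3*(1-ε)/4 * Real.log (3*(1-ε)/(3+ε))
        + ε * Real.log (4/(3+ε)) := by
  have hε1 : (0:ℝ) < 1 - ε := by linarith
  have h3ε : (0:ℝ) < 3 + ε := by linarith
  have hl2 : Real.log 2 ≠ 0 := ne_of_gt (Real.log_pos (by norm_num))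
  rw [CD_key]
  rw [Real.log_div (by positivity) (ne_of_gt h3ε), Real.log_div (by norm_num) (ne_of_gt h3ε)]
  simp only [Real.logb]
  rw [Real.log_div (h3ε.ne') (by norm_num : (4:ℝ) ≠ 0),
    Real.log_div (by positivity : (3*(1-ε):ℝ) ≠ 0) (by norm_num : (4:ℝ) ≠ 0)]
  field_simp
  ring

lemma AB_form (ε : ℝ) (h0 : 0 < ε) (h1 : ε < 1/20) :
    mi (p10 ε) vA vB * Real.log 2 =
      -((1-ε)/4 * Real.log (1-ε)) - (1+ε) * Real.log (1+ε)
        + (1+3*ε)/4 * Real.log (1+3*ε) := by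
  have hε1 : (0:ℝ) < 1 - ε := by linarith
  have hl2 : Real.log 2 ≠ 0 := ne_of_gt (Real.log_pos (by norm_num))
  rw [AB_key]
  simp only [Real.logb]
  rw [Real.log_div (ne_of_gt hε1) (by norm_num : (2:ℝ) ≠ 0),
    Real.log_div (by positivity : (1+ε:ℝ) ≠ 0) (by norm_num : (2:ℝ) ≠ 0),
    Real.log_div (ne_of_gt hε1) (by norm_num : (4:ℝ) ≠ 0),
    Real.log_div (by positivity : (1+3*ε:ℝ) ≠ 0) (by norm_num : (4:ℝ) ≠ 0)]
  have h4 : Real.log 4 = 2 * Real.log 2 := by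
    rw [show (4:ℝ) = 2^2 by norm_num, Real.log_pow]; push_cast; ring
  rw [h4]
  field_simp
  ring

lemma log2_pos : (0:ℝ) < Real.log 2 := Real.log_pos (by norm_num)
lemma log2_lt1 : Real.log 2 < 1 := by have := Real.log_two_lt_d9; linarith
lemma log2_ge : (2:ℝ)/3 ≤ Real.log 2 := by have := Real.log_two_gt_d9; linarith

lemma CD_lower (ε : ℝ) (h0 : 0 < ε) (h1 : ε < 1/20) :
    (3/16) * ε ≤ mi (p10 ε) vC vD := by
  have hε1 : (0:ℝ) < 1 - ε := by linarith
  have h3ε : (0:ℝ) < 3 + ε := by linarith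
  set a := Real.log (1-ε) with ha
  set b := Real.log (3*(1-ε)/(3+ε)) with hb
  set c := Real.log (4/(3+ε)) with hc
  have f1 : a ≤ -ε := by
    have := Real.log_le_sub_one_of_pos hε1; linarith
  have f2 : -(4*ε) ≤ 3*(1-ε) * b := by
    have hx : (0:ℝ) < 3*(1-ε)/(3+ε) := by positivity
    have h := Real.one_sub_inv_le_log_of_pos hx
    rw [inv_div] at h
    have h2 := mul_le_mul_of_nonneg_left h (by positivity : (0:ℝ) ≤ 3*(1-ε))
    calc -(4*ε) = 3*(1-ε) * (1 - (3+ε)/(3*(1-ε))) := by field_simp; ring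
    _ ≤ 3*(1-ε) * b := h2
  have f3 : (1-ε)/4 ≤ c := by
    have hx : (0:ℝ) < 4/(3+ε) := by positivity
    have h := Real.one_sub_inv_le_log_of_pos hx
    rw [inv_div] at h
    have : 1 - (3+ε)/4 = (1-ε)/4 := by ring
    linarith
  have hX : (3/16) * ε ≤ mi (p10 ε) vC vD * Real.log 2 := by
    rw [CD_form ε h0 h1]
    have p1 : (1-ε) * a ≤ (1-ε) * (-ε) := mul_le_mul_of_nonneg_left f1 (le_of_lt hε1)
    have p3 : ε * ((1-ε)/4) ≤ ε * c := mul_le_mul_of_nonneg_left f3 (le_of_lt h0)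
    nlinarith [sq_nonneg ε, mul_pos h0 hε1]
  have : (3/16) * ε * Real.log 2 ≤ mi (p10 ε) vC vD * Real.log 2 := by
    have h2 : (3/16) * ε * Real.log 2 ≤ (3/16) * ε := by
      nlinarith [log2_lt1, log2_pos]
    linarith
  exact le_of_mul_le_mul_right this log2_pos

lemma CD_upper (ε : ℝ) (h0 : 0 < ε) (h1 : ε < 1/20) :
    mi (p10 ε) vC vD ≤ 2 * ε := by
  have hε1 : (0:ℝ) < 1 - ε := by linarith
  have h3ε : (0:ℝ) < 3 + ε := by linarith
  set a := Real.log (1-ε) with ha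
  set b := Real.log (3*(1-ε)/(3+ε)) with hb
  set c := Real.log (4/(3+ε)) with hc
  have f1 : -ε/(1-ε) ≤ a := by
    have h := Real.one_sub_inv_le_log_of_pos hε1
    have : 1 - (1-ε)⁻¹ = -ε/(1-ε) := by field_simp; ring
    linarith
  have f2 : b ≤ 0 := by
    have h := Real.log_le_sub_one_of_pos (by positivity : (0:ℝ) < 3*(1-ε)/(3+ε))
    have : 3*(1-ε)/(3+ε) - 1 = -(4*ε)/(3+ε) := by field_simp; ring
    have hneg : -(4*ε)/(3+ε) ≤ 0 := by
      apply div_nonpos_of_nonpos_of_nonneg <;> linarith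
    linarith
  have f3 : c ≤ 1/3 := by
    have h := Real.log_le_sub_one_of_pos (by positivity : (0:ℝ) < 4/(3+ε))
    have h2 : (4:ℝ)/(3+ε) ≤ 4/3 := by
      rw [div_le_div_iff₀ h3ε (by norm_num : (0:ℝ) < 3)]; nlinarith
    nlinarith [h, h2]
  have hX : mi (p10 ε) vC vD * Real.log 2 ≤ (4/3) * ε := by
    rw [CD_form ε h0 h1]
    have p1 : -((1-ε) * a) ≤ ε := by
      have := mul_le_mul_of_nonneg_left f1 (le_of_lt hε1)
      have e : (1-ε) * (-ε/(1-ε)) = -ε := by field_simp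
      nlinarith
    have p2 : 3*(1-ε)/4 * b ≤ 0 := by
      apply mul_nonpos_of_nonneg_of_nonpos _ f2
      positivity
    have p3 : ε * c ≤ ε * (1/3) := mul_le_mul_of_nonneg_left f3 (le_of_lt h0)
    linarith
  nlinarith [log2_ge, log2_pos]

lemma AB_upper (ε : ℝ) (h0 : 0 < ε) (h1 : ε < 1/20) :
    mi (p10 ε) vA vB ≤ 4 * ε^2 := by
  have hε1 : (0:ℝ) < 1 - ε := by linarith
  have hε2 : (0:ℝ) < 1 + ε := by linarith
  have hε3 : (0:ℝ) < 1 + 3*ε := by linarith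
  set a := Real.log (1-ε) with ha
  set b := Real.log (1+ε) with hb
  set c := Real.log (1+3*ε) with hc
  have f1 : -ε ≤ (1-ε) * a := by
    have h := Real.one_sub_inv_le_log_of_pos hε1
    have h2 := mul_le_mul_of_nonneg_left h (le_of_lt hε1)
    have e : (1-ε) * (1 - (1-ε)⁻¹) = -ε := by field_simp; ring
    nlinarith
  have f2 : ε ≤ (1+ε) * b := by
    have h := Real.one_sub_inv_le_log_of_pos hε2
    have h2 := mul_le_mul_of_nonneg_left h (le_of_lt hε2)
    have e : (1+ε) * (1 - (1+ε)⁻¹) = ε := by field_simp; ring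
    nlinarith
  have f3 : c ≤ 3*ε := by
    have h := Real.log_le_sub_one_of_pos hε3
    linarith
  have hY : mi (p10 ε) vA vB * Real.log 2 ≤ (9/4) * ε^2 := by
    rw [AB_form ε h0 h1]
    have p3 : (1+3*ε)/4 * c ≤ (1+3*ε)/4 * (3*ε) :=
      mul_le_mul_of_nonneg_left f3 (by positivity)
    nlinarith
  nlinarith [log2_ge, log2_pos, sq_nonneg ε]

theorem p10_asymptotics :
    (∃ c₁ c₂ ε₀ : ℝ, 0 < c₁ ∧ 0 < c₂ ∧ 0 < ε₀ ∧
      ∀ ε : ℝ, 0 < ε → ε < ε₀ →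
        c₁ * ε ≤ mi (p10 ε) vC vD ∧ mi (p10 ε) vC vD ≤ c₂ * ε ∧
          mi (p10 ε) vA vB ≤ c₂ * ε ^ 2) ∧
    (∀ κ : ℝ, 0 < κ → ∃ ε₀ : ℝ, 0 < ε₀ ∧
      ∀ ε : ℝ, 0 < ε → ε < ε₀ →
        κ * mi (p10 ε) vA vB < mi (p10 ε) vC vD) := by
  constructor
  · refine ⟨3/16, 4, 1/20, by norm_num, by norm_num, by norm_num, fun ε h0 h1 => ?_⟩
    exact ⟨CD_lower ε h0 h1, (CD_upper ε h0 h1).trans (by linarith),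
      (AB_upper ε h0 h1).trans (by nlinarith)⟩
  · intro κ hκ
    refine ⟨min (1/20) (3/(64*κ)), lt_min (by norm_num) (by positivity), fun ε h0 h1 => ?_⟩
    have h20 : ε < 1/20 := lt_of_lt_of_le h1 (min_le_left _ _)
    have hκε : ε < 3/(64*κ) := lt_of_lt_of_le h1 (min_le_right _ _)
    have hAB := AB_upper ε h0 h20
    have hCD := CD_lower ε h0 h20
    have step : κ * mi (p10 ε) vA vB ≤ 4 * κ * ε^2 :=
      by nlinarith [mul_le_mul_of_nonneg_left hAB (le_of_lt hκ)]
    have step2 : 4 * κ * ε^2 < (3/16) * ε := by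
      have h3 : 64 * κ * ε < 3 := by
        have := (lt_div_iff₀ (by positivity : (0:ℝ) < 64*κ)).mp hκε
        nlinarith
      nlinarith
    linarith

end
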